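/- Let Λ be a finite set, G a transitive subgroup of S(Λ), λ0 ∈ Λ, and N(λ0) = {σ ∈ N_{S(Λ)}(G) | λ0·σ = λ0}. Let Γ be a group and m, m₁ : Γ → G surjective homomorphisms. Then there exists a bijection μ : Λ → Λ with μ(λ0) = λ0 and μ(λ·m(γ)) = μ(λ)·m₁(γ) for all λ ∈ Λ, γ ∈ Γ, if and only if there exists σ ∈ N(λ0) with m₁ = σmσ⁻¹; moreover such a σ ∈ N(λ0), when it exists, is unique. -/

import Mathlib

/-- Pointed version: a bijection `μ` fixing `l0` and intertwining the `Γ`-actions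
given by the surjections `m, m₁ : Γ → G` exists iff `m₁ = σ m σ⁻¹` for some
`σ ∈ N(λ0)` (`σ` normalizes `G` and fixes `l0`); such a `σ` is unique. -/
theorem stmt_9 {Λ : Type*} [Fintype Λ] (G : Subgroup (Equiv.Perm Λ))
    (hG : ∀ a b : Λ, ∃ g ∈ G, g a = b) (l0 : Λ)
    {Γ : Type*} [Group Γ] (m m₁ : Γ →* Equiv.Perm Λ)
    (hm : m.range = G) (hm₁ : m₁.range = G) :
    ((∃ μ : Equiv.Perm Λ, μ l0 = l0 ∧ ∀ (l : Λ) (γ : Γ), μ (m γ l) = m₁ γ (μ l)) ↔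
      (∃ σ : Equiv.Perm Λ,
        ((∀ h : Equiv.Perm Λ, h ∈ G ↔ σ * h * σ⁻¹ ∈ G) ∧ σ l0 = l0) ∧
        ∀ γ : Γ, m₁ γ = σ * m γ * σ⁻¹)) ∧
    (∀ σ τ : Equiv.Perm Λ,
      ((∀ h : Equiv.Perm Λ, h ∈ G ↔ σ * h * σ⁻¹ ∈ G) ∧ σ l0 = l0) →
      ((∀ h : Equiv.Perm Λ, h ∈ G ↔ τ * h * τ⁻¹ ∈ G) ∧ τ l0 = l0) →
      (∀ γ : Γ, m₁ γ = σ * m γ * σ⁻¹) → (∀ γ : Γ, m₁ γ = τ * m γ * τ⁻¹) →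
      σ = τ) := by
  constructor
  · constructor
    · rintro ⟨μ, hμ0, hμ⟩
      have hconj : ∀ γ : Γ, m₁ γ = μ * m γ * μ⁻¹ := by
        intro γ
        ext l
        have := hμ (μ⁻¹ l) γ
        simp only [Equiv.Perm.coe_inv, Equiv.apply_symm_apply] at this
        simpa [Equiv.Perm.mul_apply] using this.symm
      refine ⟨μ, ⟨fun h => ?_, hμ0⟩, hconj⟩
      constructor
      · intro hh
        have : h ∈ m.range := hm ▸ hh
        obtain ⟨γ, rfl⟩ := this
        rw [← hconj γ, ← hm₁]
        exact ⟨γ, rfl⟩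
      · intro hh
        have : μ * h * μ⁻¹ ∈ m₁.range := hm₁ ▸ hh
        obtain ⟨γ, hγ⟩ := this
        have : h = m γ := by
          have h3 : μ * h * μ⁻¹ = μ * m γ * μ⁻¹ := hγ.symm.trans (hconj γ)
          exact mul_left_cancel (mul_right_cancel h3)
        rw [this, ← hm]
        exact ⟨γ, rfl⟩
    · rintro ⟨σ, ⟨_, hσ0⟩, hconj⟩
      refine ⟨σ, hσ0, fun l γ => ?_⟩
      rw [hconj γ]
      simp [Equiv.Perm.mul_apply]
  · rintro σ τ ⟨_, hσ0⟩ ⟨_, hτ0⟩ hσc hτc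
    have hcomm : ∀ γ : Γ, (τ⁻¹ * σ) * m γ = m γ * (τ⁻¹ * σ) := by
      intro γ
      have h1 : σ * m γ * σ⁻¹ = τ * m γ * τ⁻¹ := (hσc γ).symm.trans (hτc γ)
      calc (τ⁻¹ * σ) * m γ = τ⁻¹ * (σ * m γ * σ⁻¹) * σ := by group
        _ = τ⁻¹ * (τ * m γ * τ⁻¹) * σ := by rw [h1]
        _ = m γ * (τ⁻¹ * σ) := by group
    have hc0 : (τ⁻¹ * σ) l0 = l0 := by
      rw [Equiv.Perm.mul_apply, hσ0]
      exact Equiv.Perm.inv_eq_iff_eq.mpr hτ0.symm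
    have hcid : τ⁻¹ * σ = 1 := by
      ext l
      obtain ⟨g, hg, hgl⟩ := hG l0 l
      have : g ∈ m.range := hm ▸ hg
      obtain ⟨γ, rfl⟩ := this
      have := congrArg (fun p : Equiv.Perm Λ => p l0) (hcomm γ)
      simp only [Equiv.Perm.mul_apply, hgl, hc0] at this
      simpa [hgl] using this
    exact (inv_mul_eq_one.mp hcid).symm
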